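/- Let m be a positive integer, n ∈ ℕ^m, s a natural number, x a complex number, and z ∈ ℂ^m. Then the sum, over all k ∈ ℕ^m with k_i ≤ n_i for each i, of C(|k|+s, k)·C(x−|k|, n−k)·z^k, equals the sum over the same range of k of C(|k|+s, k)·C(x+s+1, n−k)·(z−1)^k, where |k| = k_1 + ⋯ + k_m, 1 = (1,…,1), z^k = z_1^{k_1}⋯z_m^{k_m}, and (z−1)^k = (z_1−1)^{k_1}⋯(z_m−1)^{k_m}. -/

import Mathlib

/-- The multinomial coefficient `C(x, n) = x(x-1)⋯(x-|n|+1)/(n₁!⋯n_m!)` for `x : ℂ`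
and `n ∈ ℕ^m`, where `|n| = n₁ + ⋯ + n_m`. -/
noncomputable def multiBinom {m : ℕ} (x : ℂ) (n : Fin m → ℕ) : ℂ :=
  (∏ i ∈ Finset.range (∑ j, n j), (x - i)) / ((∏ j, Nat.factorial (n j) : ℕ) : ℂ)

noncomputable def cchoose (x : ℂ) (k : ℕ) : ℂ :=
  (∏ i ∈ Finset.range k, (x - i)) / (Nat.factorial k : ℂ)

lemma cchoose_zero (x : ℂ) : cchoose x 0 = 1 := by simp [cchoose]

lemma cchoose_pascal (x : ℂ) (k : ℕ) :
    cchoose (x+1) (k+1) = cchoose x (k+1) + cchoose x k := by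
  have h1 : ∏ i ∈ Finset.range (k+1), (x + 1 - (i:ℂ)) =
      (x+1) * ∏ i ∈ Finset.range k, (x - i) := by
    rw [Finset.prod_range_succ' (fun i => x + 1 - (i:ℂ))]
    push_cast
    rw [mul_comm]
    congr 1
    · norm_num
    · apply Finset.prod_congr rfl; intro i _; ring
  have h2 : ∏ i ∈ Finset.range (k+1), (x - (i:ℂ)) =
      (∏ i ∈ Finset.range k, (x - i)) * (x - k) := Finset.prod_range_succ _ _
  have hf : ((k+1).factorial : ℂ) ≠ 0 := Nat.cast_ne_zero.2 (Nat.factorial_ne_zero _)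
  have hf' : ((k).factorial : ℂ) ≠ 0 := Nat.cast_ne_zero.2 (Nat.factorial_ne_zero _)
  rw [cchoose, cchoose, cchoose, h1, h2]
  rw [Nat.factorial_succ]
  have hk1 : ((k:ℂ)+1) ≠ 0 := Nat.cast_add_one_ne_zero k
  push_cast
  field_simp
  ring

lemma cchoose_self_nat (T : ℕ) : cchoose (T : ℂ) T = 1 := by
  have : ∏ i ∈ Finset.range T, ((T:ℂ) - i) = (T.factorial : ℂ) := by
    have := Finset.prod_range_reflect (fun j => ((j:ℂ) + 1)) T
    rw [← Finset.prod_range_add_one_eq_factorial T]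
    push_cast
    rw [← this]
    apply Finset.prod_congr rfl
    intro j hj
    simp only [Finset.mem_range] at hj
    have : (T - 1 - j : ℕ) = T - (j+1) := by omega
    rw [this]
    have hj' : j + 1 ≤ T := hj
    push_cast [Nat.cast_sub hj']
    ring
  rw [cchoose, this, div_self (Nat.cast_ne_zero.2 (Nat.factorial_ne_zero _))]

lemma hockey (M : ℕ) : ∀ x : ℂ,
    ∑ T ∈ Finset.range (M+1), cchoose (x - T) (M - T) = cchoose (x+1) M := by
  induction M with
  | zero => intro x; simp [cchoose]
  | succ M ih =>
    intro x
    rw [Finset.sum_range_succ' (fun T => cchoose (x - T) (M + 1 - T))]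
    have h1 : ∑ T ∈ Finset.range (M+1), cchoose (x - (T+1:ℕ)) (M + 1 - (T+1)) =
        ∑ T ∈ Finset.range (M+1), cchoose ((x-1) - T) (M - T) := by
      apply Finset.sum_congr rfl; intro T _
      congr 1
      · push_cast; ring
      · omega
    rw [h1, ih (x-1)]
    simp only [Nat.cast_zero, sub_zero, Nat.sub_zero]
    rw [sub_add_cancel, add_comm (cchoose x M) (cchoose x (M+1)), cchoose_pascal]

lemma onevar (S : ℕ) : ∀ (M : ℕ) (x : ℂ),
    ∑ T ∈ Finset.range (M+1), cchoose ((S:ℂ) + T) T * cchoose (x - T) (M - T)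
      = cchoose (x + S + 1) M := by
  induction S with
  | zero =>
    intro M x
    have : ∀ T : ℕ, cchoose ((0:ℕ) + (T:ℂ)) T = 1 := by
      intro T; rw [Nat.cast_zero, zero_add, cchoose_self_nat]
    simp only [this, one_mul]
    rw [hockey M x]; norm_num
  | succ S ihS =>
    intro M
    induction M with
    | zero => intro x; simp [cchoose]
    | succ M ihM =>
      intro x
      rw [Finset.sum_range_succ'
        (fun T => cchoose (((S+1:ℕ):ℂ) + T) T * cchoose (x - T) (M + 1 - T))]
      have hsplit : ∀ t ∈ Finset.range (M+1),
          cchoose (((S+1:ℕ):ℂ) + ((t+1:ℕ):ℂ)) (t+1) * cchoose (x - ((t+1:ℕ):ℂ)) (M + 1 - (t+1))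
          = cchoose ((S:ℂ) + ((t+1:ℕ):ℂ)) (t+1) * cchoose (x - ((t+1:ℕ):ℂ)) (M + 1 - (t+1))
            + cchoose (((S+1:ℕ):ℂ) + t) t * cchoose ((x-1) - (t:ℂ)) (M - t) := by
        intro t ht
        have e1 : ((S+1:ℕ):ℂ) + ((t+1:ℕ):ℂ) = ((S:ℂ) + ((t+1:ℕ):ℂ)) + 1 := by push_cast; ring
        have e2 : ((S+1:ℕ):ℂ) + (t:ℂ) = (S:ℂ) + ((t+1:ℕ):ℂ) := by push_cast; ring
        have e3 : (x-1) - (t:ℂ) = x - ((t+1:ℕ):ℂ) := by push_cast; ring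
        have e4 : M + 1 - (t+1) = M - t := by omega
        rw [e1, cchoose_pascal, e2, e3, e4, add_mul]
      rw [Finset.sum_congr rfl hsplit, Finset.sum_add_distrib]
      have hC : ∑ t ∈ Finset.range (M+1),
          cchoose ((((S+1:ℕ)):ℂ) + t) t * cchoose ((x-1) - (t:ℂ)) (M - t)
          = cchoose (x + S + 1) M := by
        rw [ihM (x-1)]; congr 1; push_cast; ring
      have hB : (∑ t ∈ Finset.range (M+1),
            cchoose ((S:ℂ) + ((t+1:ℕ):ℂ)) (t+1) * cchoose (x - ((t+1:ℕ):ℂ)) (M + 1 - (t+1)))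
            + cchoose x (M+1)
          = cchoose (x + S + 1) (M+1) := by
        rw [← ihS (M+1) x,
          Finset.sum_range_succ' (fun T => cchoose ((S:ℂ) + T) T * cchoose (x - T) (M + 1 - T))]
        simp [cchoose_zero]
      have e0 : cchoose ((((S+1:ℕ)):ℂ) + ((0:ℕ):ℂ)) 0 * cchoose (x - ((0:ℕ):ℂ)) (M + 1 - 0)
          = cchoose x (M+1) := by simp [cchoose_zero]
      rw [e0, add_right_comm, hB, hC]
      have : x + (((S+1:ℕ)):ℂ) + 1 = (x + S + 1) + 1 := by push_cast; ring
      rw [this, cchoose_pascal (x + S + 1) M]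

lemma prod_range_add_sub (x : ℂ) (a b : ℕ) :
    ∏ i ∈ Finset.range (a+b), (x - i) =
      (∏ i ∈ Finset.range a, (x - i)) * ∏ i ∈ Finset.range b, (x - a - i) := by
  rw [Finset.prod_range_add (fun i => x - (i:ℂ)) a b]
  congr 1
  apply Finset.prod_congr rfl
  intro i _
  push_cast; ring

lemma multiBinom_nil (x : ℂ) (n : Fin 0 → ℕ) : multiBinom x n = 1 := by
  simp [multiBinom]

lemma multiBinom_succ {m : ℕ} (x : ℂ) (n : Fin (m+1) → ℕ) :
    multiBinom x n =
      cchoose x (n (Fin.last m)) * multiBinom (x - n (Fin.last m)) (n ∘ Fin.castSucc) := by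
  rw [multiBinom, multiBinom, cchoose]
  have hs : ∑ j, n j = n (Fin.last m) + ∑ i : Fin m, n (Fin.castSucc i) := by
    rw [Fin.sum_univ_castSucc]; ring
  have hp : (∏ j, Nat.factorial (n j)) =
      Nat.factorial (n (Fin.last m)) * ∏ i : Fin m, Nat.factorial (n (Fin.castSucc i)) := by
    rw [Fin.prod_univ_castSucc]; ring
  rw [hs, hp, prod_range_add_sub, div_mul_div_comm]
  push_cast
  rfl

-- key combinatorial factorization
lemma multiBinom_mul_choose {m : ℕ} (x : ℂ) (l t : Fin m → ℕ) :
    multiBinom x (l + t) * ∏ j, ((l j + t j).choose (l j) : ℂ)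
      = multiBinom x t * multiBinom (x - ∑ j, (t j : ℂ)) l := by
  have hfact : ∀ k : Fin m → ℕ, ((∏ j, Nat.factorial (k j) : ℕ) : ℂ) ≠ 0 := by
    intro k
    exact Nat.cast_ne_zero.2 (Finset.prod_ne_zero_iff.2 fun j _ => Nat.factorial_ne_zero _)
  have hch : (∏ j, ((l j + t j).choose (l j) : ℂ))
      = ((∏ j, Nat.factorial (l j + t j) : ℕ) : ℂ)
        / (((∏ j, Nat.factorial (l j) : ℕ) : ℂ) * ((∏ j, Nat.factorial (t j) : ℕ) : ℂ)) := by
    push_cast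
    rw [← Finset.prod_mul_distrib, ← Finset.prod_div_distrib]
    apply Finset.prod_congr rfl
    intro j _
    rw [Nat.cast_choose ℂ (Nat.le_add_right _ _), Nat.add_sub_cancel_left]
  have hsum : ∑ j, (l + t) j = (∑ j, t j) + ∑ j, l j := by
    simp [Pi.add_apply, Finset.sum_add_distrib]; ring
  have hnum : ∏ i ∈ Finset.range (∑ j, (l + t) j), (x - i)
      = (∏ i ∈ Finset.range (∑ j, t j), (x - i))
        * ∏ i ∈ Finset.range (∑ j, l j), ((x - ∑ j, (t j : ℂ)) - i) := by
    rw [hsum, prod_range_add_sub]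
    congr 1
    apply Finset.prod_congr rfl
    intro i _
    push_cast; ring
  have hd : ((∏ j, Nat.factorial ((l + t) j) : ℕ) : ℂ)
      = ((∏ j, Nat.factorial (l j + t j) : ℕ) : ℂ) := rfl
  rw [multiBinom, multiBinom, multiBinom, hch, hnum, hd]
  have h1 := hfact l
  have h2 := hfact t
  have h3 := hfact (l + t)
  rw [hd] at h3
  have hP : (∏ i : Fin m, (((l i + t i).factorial : ℕ) : ℂ)) ≠ 0 := by
    push_cast at h3; exact h3
  field_simp

lemma snoc_le_iff {m : ℕ} {a : Fin m → ℕ} {b : ℕ} {N : Fin (m+1) → ℕ} :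
    Fin.snoc a b ≤ N ↔ a ≤ N ∘ Fin.castSucc ∧ b ≤ N (Fin.last m) := by
  constructor
  · intro h
    refine ⟨fun i => ?_, ?_⟩
    · have := h (Fin.castSucc i); simpa using this
    · have := h (Fin.last m); simpa using this
  · rintro ⟨h1, h2⟩ i
    refine Fin.lastCases ?_ ?_ i
    · simpa using h2
    · intro j; simpa using h1 j

lemma sum_Iic_pi_succ {M : Type*} [AddCommMonoid M] {m : ℕ} (N : Fin (m+1) → ℕ)
    (f : (Fin (m+1) → ℕ) → M) :
    ∑ t ∈ Finset.Iic N, f t =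
      ∑ t' ∈ Finset.Iic (N ∘ Fin.castSucc), ∑ u ∈ Finset.Iic (N (Fin.last m)),
        f (Fin.snoc t' u) := by
  have step : ∑ t ∈ Finset.Iic N, f t =
      ∑ p ∈ Finset.Iic (N ∘ Fin.castSucc) ×ˢ Finset.Iic (N (Fin.last m)),
        f (Fin.snoc p.1 p.2) := by
    apply Finset.sum_nbij' (i := fun t => (t ∘ Fin.castSucc, t (Fin.last m)))
      (j := fun p => Fin.snoc p.1 p.2)
    · intro t ht
      simp only [Finset.mem_Iic] at ht
      simp only [Finset.mem_product, Finset.mem_Iic]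
      exact ⟨fun i => ht _, ht _⟩
    · intro p hp
      simp only [Finset.mem_product, Finset.mem_Iic] at hp
      simp only [Finset.mem_Iic]
      exact snoc_le_iff.2 hp
    · intro t _; exact Fin.snoc_init_self t
    · intro p _
      ext
      · simp
      · simp
    · intro t _
      have h : Fin.snoc (t ∘ Fin.castSucc) (t (Fin.last m)) = t := Fin.snoc_init_self t
      exact congrArg f h.symm
  rw [step, Finset.sum_product]

theorem star : ∀ (m : ℕ) (N : Fin m → ℕ) (S : ℕ) (x : ℂ),
    ∑ t ∈ Finset.Iic N,
      multiBinom ((∑ j, (t j : ℂ)) + S) t * multiBinom (x - ∑ j, (t j : ℂ)) (N - t)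
      = multiBinom (x + S + 1) N := by
  intro m
  induction m with
  | zero =>
    intro N S x
    have : Finset.Iic N = {N} := by
      ext t
      simp only [Finset.mem_Iic, Finset.mem_singleton]
      constructor
      · intro _; exact Subsingleton.elim _ _
      · intro h; exact h ▸ le_refl N
    rw [this, Finset.sum_singleton, multiBinom_nil, multiBinom_nil, multiBinom_nil, mul_one]
  | succ m ih =>
    intro N S x
    set N' : Fin m → ℕ := N ∘ Fin.castSucc with hN'
    set Nm : ℕ := N (Fin.last m) with hNm
    have multiBinom_snoc : ∀ (y : ℂ) (a : Fin m → ℕ) (b : ℕ),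
        multiBinom y (Fin.snoc a b) = cchoose y b * multiBinom (y - b) a := by
      intro y a b
      have h1 : (Fin.snoc a b : Fin (m+1) → ℕ) (Fin.last m) = b := by simp
      have h2 : (Fin.snoc a b : Fin (m+1) → ℕ) ∘ Fin.castSucc = a := by funext i; simp
      rw [multiBinom_succ, h1, h2]
    rw [sum_Iic_pi_succ N (fun t =>
      multiBinom ((∑ j, (t j : ℂ)) + S) t * multiBinom (x - ∑ j, (t j : ℂ)) (N - t))]
    have hterm : ∀ t' ∈ Finset.Iic N', ∀ u ∈ Finset.Iic Nm,
        multiBinom ((∑ j, ((Fin.snoc t' u : Fin (m+1) → ℕ) j : ℂ)) + S) (Fin.snoc t' u) *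
          multiBinom (x - ∑ j, ((Fin.snoc t' u : Fin (m+1) → ℕ) j : ℂ)) (N - Fin.snoc t' u)
        = (multiBinom ((∑ i, (t' i : ℂ)) + S) t' *
            multiBinom ((x - Nm) - ∑ i, (t' i : ℂ)) (N' - t')) *
          (cchoose (((((∑ i, t' i) + S : ℕ)) : ℂ) + u) u *
            cchoose ((x - ∑ i, (t' i : ℂ)) - u) (Nm - u)) := by
      intro t' ht' u hu
      simp only [Finset.mem_Iic] at ht' hu
      have hsum : ∑ j, ((Fin.snoc t' u : Fin (m+1) → ℕ) j : ℂ) = (∑ i, (t' i : ℂ)) + u := by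
        rw [Fin.sum_univ_castSucc]
        simp
      have hNt : N - Fin.snoc t' u = Fin.snoc (N' - t') (Nm - u) := by
        funext j
        refine Fin.lastCases ?_ ?_ j
        · simp [Pi.sub_apply, hNm]
        · intro i; simp [Pi.sub_apply, hN']
      rw [hsum, hNt, multiBinom_snoc, multiBinom_snoc]
      have e1 : (∑ i, (t' i : ℂ)) + (u : ℂ) + S - u = (∑ i, (t' i : ℂ)) + S := by ring
      have e2 : (∑ i, (t' i : ℂ)) + (u : ℂ) + S = ((((∑ i, t' i) + S : ℕ)) : ℂ) + u := by
        push_cast; ring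
      have e3 : x - ((∑ i, (t' i : ℂ)) + u) = (x - ∑ i, (t' i : ℂ)) - u := by ring
      have e4 : x - (∑ i, (t' i : ℂ)) - u - ((Nm - u : ℕ) : ℂ)
          = (x - Nm) - ∑ i, (t' i : ℂ) := by
        rw [Nat.cast_sub hu]; ring
      rw [e1, e2, e3, e4]
      ring
    rw [Finset.sum_congr rfl (fun t' ht' => Finset.sum_congr rfl (hterm t' ht'))]
    have hrange : Finset.Iic Nm = Finset.range (Nm + 1) := by
      ext a; simp [Nat.lt_succ_iff]
    have hinner : ∀ t' : Fin m → ℕ,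
        ∑ u ∈ Finset.Iic Nm,
          (cchoose (((((∑ i, t' i) + S : ℕ)) : ℂ) + u) u *
            cchoose ((x - ∑ i, (t' i : ℂ)) - u) (Nm - u))
        = cchoose (x + S + 1) Nm := by
      intro t'
      rw [hrange, onevar ((∑ i, t' i) + S) Nm (x - ∑ i, (t' i : ℂ))]
      congr 1
      push_cast; ring
    have hout : ∀ t' ∈ Finset.Iic N',
        ∑ u ∈ Finset.Iic Nm,
          ((multiBinom ((∑ i, (t' i : ℂ)) + S) t' *
            multiBinom ((x - Nm) - ∑ i, (t' i : ℂ)) (N' - t')) *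
          (cchoose (((((∑ i, t' i) + S : ℕ)) : ℂ) + u) u *
            cchoose ((x - ∑ i, (t' i : ℂ)) - u) (Nm - u)))
        = (multiBinom ((∑ i, (t' i : ℂ)) + S) t' *
            multiBinom ((x - Nm) - ∑ i, (t' i : ℂ)) (N' - t')) * cchoose (x + S + 1) Nm := by
      intro t' _
      rw [← Finset.mul_sum, hinner t']
    rw [Finset.sum_congr rfl hout, ← Finset.sum_mul, ih N' S (x - Nm)]
    rw [multiBinom_succ (x + S + 1) N]
    have : x + (S : ℂ) + 1 - Nm = x - Nm + S + 1 := by ring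
    rw [this, mul_comm]

theorem multinomial_ks_identity (m : ℕ) (hm : 0 < m) (n : Fin m → ℕ) (s : ℕ) (x : ℂ)
    (z : Fin m → ℂ) :
    ∑ k ∈ Finset.Iic n,
        multiBinom ((∑ j, (k j : ℂ)) + s) k * multiBinom (x - ∑ j, (k j : ℂ)) (n - k) *
          ∏ j, z j ^ k j =
      ∑ k ∈ Finset.Iic n,
        multiBinom ((∑ j, (k j : ℂ)) + s) k * multiBinom (x + s + 1) (n - k) *
          ∏ j, (z j - 1) ^ k j := by
  -- abbreviation for the coefficient
  set A : (Fin m → ℕ) → ℂ := fun k =>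
    multiBinom ((∑ j, (k j : ℂ)) + s) k * multiBinom (x - ∑ j, (k j : ℂ)) (n - k) with hA
  -- Step 1: binomial expansion of the z-power product
  have hexp : ∀ k : Fin m → ℕ, (∏ j, z j ^ k j) =
      ∑ l ∈ Finset.Iic k, (∏ j, ((k j).choose (l j) : ℂ)) * ∏ j, (z j - 1) ^ l j := by
    intro k
    have h1 : ∀ j, z j ^ k j
        = ∑ i ∈ Finset.Iic (k j), (z j - 1) ^ i * ((k j).choose i : ℂ) := by
      intro j
      have hz : z j = (z j - 1) + 1 := by ring
      have hIr : Finset.Iic (k j) = Finset.range (k j + 1) := by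
        ext a; simp [Nat.lt_succ_iff]
      rw [hIr]
      nth_rewrite 1 [hz]
      rw [add_pow (z j - 1) 1 (k j)]
      apply Finset.sum_congr rfl
      intro i _
      rw [one_pow, mul_one]
    have hpi : Fintype.piFinset (fun j => Finset.Iic (k j)) = Finset.Iic k := by
      ext l
      simp only [Fintype.mem_piFinset, Finset.mem_Iic]
      exact Pi.le_def.symm
    calc ∏ j, z j ^ k j
        = ∏ j, ∑ i ∈ Finset.Iic (k j), (z j - 1) ^ i * ((k j).choose i : ℂ) :=
          Finset.prod_congr rfl (fun j _ => h1 j)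
      _ = ∑ l ∈ Fintype.piFinset (fun j => Finset.Iic (k j)),
            ∏ j, (z j - 1) ^ (l j) * ((k j).choose (l j) : ℂ) :=
          Finset.prod_univ_sum _ _
      _ = ∑ l ∈ Finset.Iic k, (∏ j, ((k j).choose (l j) : ℂ)) * ∏ j, (z j - 1) ^ l j := by
          rw [hpi]
          apply Finset.sum_congr rfl
          intro l _
          rw [Finset.prod_mul_distrib, mul_comm]
  -- Step 2: LHS as a double sum, swap order
  have step2 : ∑ k ∈ Finset.Iic n, A k * ∏ j, z j ^ k j
      = ∑ l ∈ Finset.Iic n, ∑ k ∈ Finset.Icc l n,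
          A k * ((∏ j, ((k j).choose (l j) : ℂ)) * ∏ j, (z j - 1) ^ l j) := by
    have : ∀ k ∈ Finset.Iic n, A k * ∏ j, z j ^ k j
        = ∑ l ∈ Finset.Iic k, A k * ((∏ j, ((k j).choose (l j) : ℂ)) * ∏ j, (z j - 1) ^ l j) := by
      intro k _
      rw [hexp k, Finset.mul_sum]
    rw [Finset.sum_congr rfl this]
    apply Finset.sum_comm'
    intro k l
    simp only [Finset.mem_Iic, Finset.mem_Icc]
    constructor
    · rintro ⟨h1, h2⟩; exact ⟨⟨h2, h1⟩, le_trans h2 h1⟩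
    · rintro ⟨⟨h1, h2⟩, _⟩; exact ⟨h2, h1⟩
  rw [step2]
  apply Finset.sum_congr rfl
  intro l hl
  rw [Finset.mem_Iic] at hl
  -- Step 3: reindex k = l + t
  have step3 : ∑ k ∈ Finset.Icc l n,
        A k * ((∏ j, ((k j).choose (l j) : ℂ)) * ∏ j, (z j - 1) ^ l j)
      = ∑ t ∈ Finset.Iic (n - l),
        A (l + t) * ((∏ j, ((l j + t j).choose (l j) : ℂ)) * ∏ j, (z j - 1) ^ l j) := by
    apply Finset.sum_nbij' (i := fun k => k - l) (j := fun t => l + t)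
    · intro k hk
      simp only [Finset.mem_Icc] at hk
      simp only [Finset.mem_Iic]
      intro j
      exact Nat.sub_le_sub_right (hk.2 j) (l j)
    · intro t ht
      simp only [Finset.mem_Iic] at ht
      simp only [Finset.mem_Icc]
      constructor
      · intro j; exact Nat.le_add_right _ _
      · intro j
        have h1 : t j ≤ (n - l) j := ht j
        have h2 : l j ≤ n j := hl j
        simp only [Pi.sub_apply] at h1
        simp only [Pi.add_apply]
        omega
    · intro k hk
      simp only [Finset.mem_Icc] at hk
      funext j
      have h : l j ≤ k j := hk.1 j
      simp only [Pi.add_apply, Pi.sub_apply]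
      omega
    · intro t _
      funext j
      simp only [Pi.add_apply, Pi.sub_apply]
      omega
    · intro k hk
      simp only [Finset.mem_Icc] at hk
      have hk' : l + (k - l) = k := by
        funext j
        have h : l j ≤ k j := hk.1 j
        simp only [Pi.add_apply, Pi.sub_apply]
        omega
      rw [hk']
      have hch : ∀ j ∈ Finset.univ, (((k j).choose (l j)) : ℂ)
          = (((l j + (k - l) j).choose (l j)) : ℂ) := by
        intro j _
        have h : l j ≤ k j := hk.1 j
        have e : l j + (k - l) j = k j := by simp only [Pi.sub_apply]; omega
        rw [e]
      rw [Finset.prod_congr rfl hch]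
  rw [step3]
  -- Step 4: algebra + star
  have step4 : ∀ t ∈ Finset.Iic (n - l),
      A (l + t) * ((∏ j, ((l j + t j).choose (l j) : ℂ)) * ∏ j, (z j - 1) ^ l j)
      = (multiBinom ((∑ j, (l j : ℂ)) + s) l * ∏ j, (z j - 1) ^ l j) *
        (multiBinom ((∑ j, (t j : ℂ)) + (((∑ j, l j) + s : ℕ) : ℂ)) t *
          multiBinom ((x - ∑ j, (l j : ℂ)) - ∑ j, (t j : ℂ)) ((n - l) - t)) := by
    intro t ht
    have hsum : (∑ j, ((l + t) j : ℂ)) = (∑ j, (l j : ℂ)) + ∑ j, (t j : ℂ) := by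
      push_cast [Pi.add_apply]
      rw [Finset.sum_add_distrib]
    have hmc := multiBinom_mul_choose ((∑ j, ((l + t) j : ℂ)) + s) l t
    have harg1 : (∑ j, ((l + t) j : ℂ)) + (s : ℂ) - ∑ j, (t j : ℂ)
        = (∑ j, (l j : ℂ)) + s := by rw [hsum]; ring
    have harg2 : (∑ j, ((l + t) j : ℂ)) + (s : ℂ)
        = (∑ j, (t j : ℂ)) + (((∑ j, l j) + s : ℕ) : ℂ) := by
      rw [hsum]; push_cast; ring
    rw [harg1, harg2] at hmc
    have hsub : n - (l + t) = (n - l) - t := by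
      funext j
      simp only [Pi.sub_apply, Pi.add_apply]
      omega
    have harg3 : x - (∑ j, ((l + t) j : ℂ))
        = (x - ∑ j, (l j : ℂ)) - ∑ j, (t j : ℂ) := by rw [hsum]; ring
    rw [hA]
    simp only
    rw [hsub, harg3, harg2]
    calc multiBinom ((∑ j, (t j:ℂ)) + (((∑ j, l j) + s : ℕ):ℂ)) (l + t) *
          multiBinom ((x - ∑ j, (l j:ℂ)) - ∑ j, (t j:ℂ)) ((n - l) - t) *
          ((∏ j, ((l j + t j).choose (l j) : ℂ)) * ∏ j, (z j - 1) ^ l j)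
        = (multiBinom ((∑ j, (t j:ℂ)) + (((∑ j, l j) + s : ℕ):ℂ)) (l + t) *
            ∏ j, ((l j + t j).choose (l j) : ℂ)) *
          multiBinom ((x - ∑ j, (l j:ℂ)) - ∑ j, (t j:ℂ)) ((n - l) - t) *
          ∏ j, (z j - 1) ^ l j := by ring
      _ = _ := by rw [hmc]; ring
  rw [Finset.sum_congr rfl step4, ← Finset.mul_sum]
  have hstar := star m (n - l) ((∑ j, l j) + s) (x - ∑ j, (l j : ℂ))
  rw [hstar]
  have : x - (∑ j, (l j : ℂ)) + (((∑ j, l j) + s : ℕ) : ℂ) + 1 = x + s + 1 := by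
    push_cast; ring
  rw [this]
  ring
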